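/- If U : [t₀, ∞) → ℝ is bounded and continuous, and k solves k⁽³⁾ + K_d k̈ + K_p k̇ + K_i k = U with K_p, K_d, K_i > 0 and K_p K_d > K_i, then k, k̇, and k̈ are bounded on [t₀, ∞) (BIBO stability of the third-order system). -/

import Mathlib

open Set Real

/-- gronwallBound with negative K is bounded by `δ + ε / (-K)`. -/
lemma gron_aux {K δ ε x : ℝ} (hK : K < 0) (hδ : 0 ≤ δ) (hε : 0 ≤ ε) (hx : 0 ≤ x) :
    gronwallBound δ K ε x ≤ δ + ε / (-K) := by
  have hKne : K ≠ 0 := ne_of_lt hK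
  rw [gronwallBound_of_K_ne_0 hKne]
  have he1 : Real.exp (K * x) ≤ 1 := by
    apply Real.exp_le_one_iff.mpr
    exact mul_nonpos_of_nonpos_of_nonneg hK.le hx
  have he0 : 0 < Real.exp (K * x) := Real.exp_pos _
  have h1 : δ * Real.exp (K * x) ≤ δ := by nlinarith
  have h2 : ε / K * (Real.exp (K * x) - 1) ≤ ε / (-K) := by
    have hd : ε / K ≤ 0 := div_nonpos_of_nonneg_of_nonpos hε hK.le
    rw [div_neg]
    nlinarith [he0]
  linarith

/-- Grönwall comparison: `w' ≤ K w + ε` with `K < 0` gives a uniform bound. -/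
lemma gron (t₀ K ε δ : ℝ) (hK : K < 0) (hδ : 0 ≤ δ) (hε : 0 ≤ ε)
    (w w' : ℝ → ℝ) (hw : ∀ t, t₀ ≤ t → HasDerivAt w (w' t) t)
    (hb : ∀ t, t₀ ≤ t → w' t ≤ K * w t + ε) (h0 : w t₀ ≤ δ) :
    ∀ t, t₀ ≤ t → w t ≤ δ + ε / (-K) := by
  intro T hT
  have key : ∀ x ∈ Icc t₀ T, w x ≤ gronwallBound δ K ε (x - t₀) := by
    apply le_gronwallBound_of_liminf_deriv_right_le (f' := w')
    · intro t ht
      exact (hw t ht.1).continuousAt.continuousWithinAt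
    · intro x hx r hr
      exact (hw x hx.1).hasDerivWithinAt.liminf_right_slope_le hr
    · exact h0
    · exact fun x hx => hb x hx.1
  have := key T ⟨hT, le_rfl⟩
  exact this.trans (gron_aux hK hδ hε (by linarith))

/-- Decay of a scalar linear ODE with negative coefficient and bounded input. -/
lemma scalar_decay (t₀ μ C : ℝ) (hμ : μ < 0) (v g : ℝ → ℝ)
    (hg : ∀ t, t₀ ≤ t → |g t| ≤ C)
    (hv : ∀ t, t₀ ≤ t → HasDerivAt v (μ * v t + g t) t) :
    ∀ t, t₀ ≤ t → |v t| ≤ Real.sqrt ((v t₀)^2 + C^2 / μ^2) := by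
  have hμ2 : (0:ℝ) < -μ := neg_pos.mpr hμ
  have hbdd : ∀ t, t₀ ≤ t → (v t)^2 ≤ (v t₀)^2 + (C^2 / (-μ)) / (-μ) := by
    apply gron t₀ μ (C^2 / (-μ)) ((v t₀)^2) hμ (sq_nonneg _) (by positivity)
      (fun t => (v t)^2) (fun t => 2 * v t * (μ * v t + g t))
    · intro t ht
      have := (hv t ht).fun_pow 2
      refine this.congr_deriv ?_
      push_cast
      ring
    · intro t ht
      have h1 : |g t| ≤ C := hg t ht
      have h2 : (g t)^2 ≤ C^2 := by
        nlinarith [abs_nonneg (g t), neg_abs_le (g t), le_abs_self (g t)]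
      have key : 2 * v t * (μ * v t + g t) - μ * (v t)^2 ≤ C^2 / (-μ) := by
        rw [le_div_iff₀ hμ2]
        nlinarith [sq_nonneg (μ * v t + g t)]
      linarith
    · exact le_rfl
  intro t ht
  have h1 := hbdd t ht
  have h2 : (C^2 / (-μ)) / (-μ) = C^2 / μ^2 := by
    rw [div_div]
    congr 1
    ring
  rw [h2] at h1
  calc |v t| = Real.sqrt ((v t)^2) := (Real.sqrt_sq_eq_abs _).symm
    _ ≤ _ := Real.sqrt_le_sqrt h1

set_option maxHeartbeats 1000000 in
theorem stmt_16 (Kp Kd Ki t₀ : ℝ) (hKp : 0 < Kp) (hKd : 0 < Kd) (hKi : 0 < Ki)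
    (hRH : Ki < Kp * Kd) (U k : ℝ → ℝ)
    (hUbdd : ∃ C : ℝ, ∀ t, t₀ ≤ t → |U t| ≤ C)
    (hUcont : ContinuousOn U (Set.Ici t₀))
    (hk : ContDiff ℝ 3 k)
    (hode : ∀ t, t₀ ≤ t →
      iteratedDeriv 3 k t + Kd * iteratedDeriv 2 k t + Kp * deriv k t + Ki * k t = U t) :
    ∃ C : ℝ, ∀ t, t₀ ≤ t →
      |k t| ≤ C ∧ |deriv k t| ≤ C ∧ |deriv (deriv k) t| ≤ C := by
  obtain ⟨C, hU⟩ := hUbdd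
  -- derivatives
  have hk3 : ContDiff ℝ (2+1) k := by norm_num at hk ⊢; exact hk
  have hdk : Differentiable ℝ k := hk3.differentiable (by norm_num)
  have hk2 : ContDiff ℝ (1+1) (deriv k) := (contDiff_succ_iff_deriv.mp hk3).2.2
  have hdk1 : Differentiable ℝ (deriv k) := hk2.differentiable (by norm_num)
  have hk1 : ContDiff ℝ (0+1) (deriv (deriv k)) := (contDiff_succ_iff_deriv.mp hk2).2.2
  have hdk2 : Differentiable ℝ (deriv (deriv k)) := hk1.differentiable (by norm_num)
  have hD0 : ∀ t, HasDerivAt k (deriv k t) t := fun t => (hdk t).hasDerivAt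
  have hD1 : ∀ t, HasDerivAt (deriv k) (deriv (deriv k) t) t := fun t => (hdk1 t).hasDerivAt
  have hD2 : ∀ t, HasDerivAt (deriv (deriv k)) (deriv (deriv (deriv k)) t) t :=
    fun t => (hdk2 t).hasDerivAt
  have hode' : ∀ t, t₀ ≤ t → deriv (deriv (deriv k)) t + Kd * deriv (deriv k) t
      + Kp * deriv k t + Ki * k t = U t := by
    intro t ht
    have h := hode t ht
    rw [show (3:ℕ) = 2+1 from rfl, iteratedDeriv_succ, show (2:ℕ) = 1+1 from rfl,
      iteratedDeriv_succ, iteratedDeriv_one] at h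
    exact h
  -- real negative root of the characteristic polynomial
  obtain ⟨r, hrmem, hfr⟩ : ∃ r ∈ Ioo (-Kd) 0, r^3 + Kd*r^2 + Kp*r + Ki = 0 := by
    have hcont : ContinuousOn (fun s : ℝ => s^3 + Kd*s^2 + Kp*s + Ki) (Icc (-Kd) 0) := by
      fun_prop
    have hsub := intermediate_value_Ioo (by linarith : (-Kd) ≤ 0) hcont
    have h0 : (0:ℝ) ∈ Ioo ((fun s : ℝ => s^3 + Kd*s^2 + Kp*s + Ki) (-Kd))
        ((fun s : ℝ => s^3 + Kd*s^2 + Kp*s + Ki) 0) := by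
      constructor <;> simp <;> nlinarith
    obtain ⟨r, hr1, hr2⟩ := hsub h0
    exact ⟨r, hr1, hr2⟩
  obtain ⟨hrl, hrneg⟩ := hrmem
  set p : ℝ := Kd + r with hpdef
  set q : ℝ := Kp + r * p with hqdef
  have hp : 0 < p := by simp [hpdef]; linarith
  have hrq : r * q = -Ki := by rw [hqdef, hpdef]; nlinarith [hfr]
  have hq : 0 < q := by nlinarith
  -- first reduction : u = k'' + p k' + q k satisfies u' = r u + U
  set u : ℝ → ℝ := fun t => deriv (deriv k) t + p * deriv k t + q * k t with hudef
  have hu' : ∀ t, t₀ ≤ t → HasDerivAt u (r * u t + U t) t := by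
    intro t ht
    have h := ((hD2 t).add ((hD1 t).const_mul p)).add ((hD0 t).const_mul q)
    have heq : r * u t + U t = deriv (deriv (deriv k)) t + p * deriv (deriv k) t
        + q * deriv k t := by
      have h2 := hode' t ht
      simp only [hudef]
      linear_combination -h2 + (k t) * hrq
    rw [heq]
    exact h
  set Cu : ℝ := Real.sqrt ((u t₀)^2 + C^2 / r^2) with hCudef
  have huB : ∀ t, t₀ ≤ t → |u t| ≤ Cu := scalar_decay t₀ r C hrneg u U hU hu'
  have hCu0 : 0 ≤ Cu := Real.sqrt_nonneg _
  have hd2eq : ∀ t, deriv (deriv k) t = u t - p * deriv k t - q * k t := by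
    intro t; simp only [hudef]; ring
  clear_value p q Cu
  -- it now suffices to bound k and k'
  suffices h : ∃ A B : ℝ, 0 ≤ A ∧ 0 ≤ B ∧ ∀ t, t₀ ≤ t → |k t| ≤ A ∧ |deriv k t| ≤ B by
    obtain ⟨A, B, hA0, hB0, hAB⟩ := h
    refine ⟨A + B + (Cu + p * B + q * A), fun t ht => ?_⟩
    obtain ⟨h1, h2⟩ := hAB t ht
    have h3 : |deriv (deriv k) t| ≤ Cu + p * B + q * A := by
      rw [hd2eq t]
      have e1 : |u t - p * deriv k t - q * k t| ≤ |u t - p * deriv k t| + |q * k t| :=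
        abs_sub _ _
      have e2 : |u t - p * deriv k t| ≤ |u t| + |p * deriv k t| := abs_sub _ _
      have e3 : |p * deriv k t| ≤ p * B := by
        rw [abs_mul, abs_of_pos hp]; exact mul_le_mul_of_nonneg_left h2 hp.le
      have e4 : |q * k t| ≤ q * A := by
        rw [abs_mul, abs_of_pos hq]; exact mul_le_mul_of_nonneg_left h1 hq.le
      have e5 := huB t ht
      linarith
    have hpB : 0 ≤ p * B := by positivity
    have hqA : 0 ≤ q * A := by positivity
    refine ⟨by linarith, by linarith, by linarith⟩
  -- second-order system k'' + p k' + q k = u, split on discriminant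
  rcases le_or_gt (4*q) (p^2) with hdisc | hdisc
  · -- real roots μ1, μ2
    set s : ℝ := Real.sqrt (p^2 - 4*q) with hsdef
    have hs0 : 0 ≤ s := Real.sqrt_nonneg _
    have hs2 : s^2 = p^2 - 4*q := Real.sq_sqrt (by linarith)
    have hslt : s < p := by
      have : s < Real.sqrt (p^2) := Real.sqrt_lt_sqrt (by linarith) (by nlinarith)
      rwa [Real.sqrt_sq hp.le] at this
    set μ1 : ℝ := (-p + s)/2 with hμ1def
    set μ2 : ℝ := (-p - s)/2 with hμ2def
    have hμ1 : μ1 < 0 := by rw [hμ1def]; linarith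
    have hμ2 : μ2 < 0 := by rw [hμ2def]; linarith
    have hsum : μ1 + μ2 = -p := by rw [hμ1def, hμ2def]; ring
    have hprod : μ1 * μ2 = q := by rw [hμ1def, hμ2def]; nlinarith [hs2]
    clear_value μ1 μ2
    set v : ℝ → ℝ := fun t => deriv k t - μ1 * k t with hvdef
    have hv' : ∀ t, t₀ ≤ t → HasDerivAt v (μ2 * v t + u t) t := by
      intro t ht
      have h := (hD1 t).sub ((hD0 t).const_mul μ1)
      have heq : μ2 * v t + u t = deriv (deriv k) t - μ1 * deriv k t := by
        simp only [hvdef, hudef]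
        linear_combination (deriv k t) * hsum - (k t) * hprod
      rw [heq]; exact h
    set Cv : ℝ := Real.sqrt ((v t₀)^2 + Cu^2 / μ2^2) with hCvdef
    have hvB : ∀ t, t₀ ≤ t → |v t| ≤ Cv := scalar_decay t₀ μ2 Cu hμ2 v u huB hv'
    have hCv0 : 0 ≤ Cv := Real.sqrt_nonneg _
    clear_value Cv
    have hk' : ∀ t, t₀ ≤ t → HasDerivAt k (μ1 * k t + v t) t := by
      intro t ht
      have h := hD0 t
      have heq : μ1 * k t + v t = deriv k t := by simp only [hvdef]; ring
      rwa [← heq] at h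
    set Ck : ℝ := Real.sqrt ((k t₀)^2 + Cv^2 / μ1^2) with hCkdef
    have hkB : ∀ t, t₀ ≤ t → |k t| ≤ Ck := scalar_decay t₀ μ1 Cv hμ1 k v hvB hk'
    have hCk0 : 0 ≤ Ck := Real.sqrt_nonneg _
    clear_value Ck
    refine ⟨Ck, |μ1| * Ck + Cv, hCk0, by positivity, fun t ht => ⟨hkB t ht, ?_⟩⟩
    have h1 : deriv k t = μ1 * k t + v t := by simp only [hvdef]; ring
    rw [h1]
    calc |μ1 * k t + v t| ≤ |μ1 * k t| + |v t| := abs_add_le _ _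
      _ ≤ |μ1| * Ck + Cv := by
          rw [abs_mul]
          have := hkB t ht
          have := hvB t ht
          gcongr
  · -- complex roots, Lyapunov function ω2 k² + (k' + (p/2) k)²
    set ω2 : ℝ := q - p^2/4 with hω2def
    have hω2 : 0 < ω2 := by rw [hω2def]; linarith
    clear_value ω2
    set w : ℝ → ℝ := fun t => ω2 * (k t)^2 + (deriv k t + (p/2) * k t)^2 with hwdef
    set ε : ℝ := 2 / p * Cu^2 with hεdef
    have hε0 : 0 ≤ ε := by rw [hεdef]; positivity
    clear_value ε
    set B : ℝ := w t₀ + ε / (p/2) with hBdef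
    have hwt₀ : 0 ≤ w t₀ := by simp only [hwdef]; positivity
    have hB0 : 0 ≤ B := by
      have : 0 ≤ ε / (p/2) := by positivity
      rw [hBdef]; exact add_nonneg hwt₀ this
    have hwB : ∀ t, t₀ ≤ t → w t ≤ B := by
      have hgr := gron t₀ (-(p/2)) ε (w t₀) (by linarith) hwt₀ hε0 w
        (fun t => 2 * ω2 * k t * deriv k t
          + 2 * (deriv k t + (p/2) * k t) * (deriv (deriv k) t + (p/2) * deriv k t))
        ?_ ?_ le_rfl
      · intro t ht
        have h9 := hgr t ht
        rw [neg_neg] at h9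
        rw [hBdef]
        exact h9
      · intro t ht
        have h1 := ((hD0 t).fun_pow 2).const_mul ω2
        have h2 := ((hD1 t).fun_add ((hD0 t).const_mul (p/2))).fun_pow 2
        have h := h1.add h2
        refine h.congr_deriv ?_
        push_cast
        ring
      · intro t ht
        show 2 * ω2 * k t * deriv k t
          + 2 * (deriv k t + (p/2) * k t) * (deriv (deriv k) t + (p/2) * deriv k t)
          ≤ -(p/2) * w t + ε
        have hueq : deriv (deriv k) t = u t - p * deriv k t - q * k t := hd2eq t
        rw [hueq]
        set x := k t
        set y := deriv k t
        set g := u t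
        have hgB : |g| ≤ Cu := huB t ht
        have hg2 : g^2 ≤ Cu^2 := by
          nlinarith [abs_nonneg g, neg_abs_le g, le_abs_self g]
        have hid : 2 * ω2 * x * y + 2 * (y + (p/2) * x) * ((g - p * y - q * x) + (p/2) * y)
            = -p * (ω2 * x^2 + (y + (p/2)*x)^2) + 2 * (y + (p/2)*x) * g := by
          rw [hω2def]; ring
        rw [hid]
        have hz2 : 2 * (y + (p/2)*x) * g ≤ (p/2) * (y + (p/2)*x)^2 + (2/p) * g^2 := by
          rw [← sub_nonneg]
          have e : (p/2) * (y + (p/2)*x)^2 + (2/p) * g^2 - 2 * (y + (p/2)*x) * g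
              = (p * (y + (p/2)*x) - 2 * g)^2 / (2*p) := by
            field_simp
            ring
          rw [e]; positivity
        have hww : w t = ω2 * x^2 + (y + (p/2)*x)^2 := by simp [hwdef]; rfl
        have hx2 : 0 ≤ ω2 * x^2 := by positivity
        have hcu : (2/p) * g^2 ≤ ε := by
          rw [hεdef]
          have : (0:ℝ) < 2/p := by positivity
          calc (2/p) * g^2 ≤ (2/p) * Cu^2 := by gcongr
            _ = 2 / p * Cu^2 := by ring
        rw [hww]
        nlinarith
    clear_value w B
    refine ⟨Real.sqrt (B / ω2), Real.sqrt B + (p/2) * Real.sqrt (B / ω2),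
      Real.sqrt_nonneg _, by positivity, fun t ht => ?_⟩
    have hw := hwB t ht
    have hz2 : (deriv k t + (p/2) * k t)^2 ≤ B := by
      have : 0 ≤ ω2 * (k t)^2 := by positivity
      simp only [hwdef] at hw
      linarith
    have hx2 : (k t)^2 ≤ B / ω2 := by
      rw [le_div_iff₀ hω2]
      have : 0 ≤ (deriv k t + (p/2) * k t)^2 := sq_nonneg _
      simp only [hwdef] at hw
      have e : k t^2 * ω2 = ω2 * k t^2 := by ring
      linarith
    have hkb : |k t| ≤ Real.sqrt (B / ω2) := by
      rw [← Real.sqrt_sq_eq_abs]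
      exact Real.sqrt_le_sqrt hx2
    refine ⟨hkb, ?_⟩
    have hzb : |deriv k t + (p/2) * k t| ≤ Real.sqrt B := by
      rw [← Real.sqrt_sq_eq_abs]
      exact Real.sqrt_le_sqrt hz2
    have e1 : |deriv k t| = |(deriv k t + (p/2) * k t) - (p/2) * k t| := by ring_nf
    have e2 : |(deriv k t + (p/2) * k t) - (p/2) * k t|
        ≤ |deriv k t + (p/2) * k t| + |(p/2) * k t| := abs_sub _ _
    have e3 : |(p/2) * k t| ≤ (p/2) * Real.sqrt (B / ω2) := by
      rw [abs_mul, abs_of_pos (by positivity : (0:ℝ) < p/2)]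
      exact mul_le_mul_of_nonneg_left hkb (by positivity)
    rw [e1]
    linarith
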